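/- arXiv:1506.05579 — 2 statements merged into one kernel-verified Lean document; each statement's English description precedes it below -/
import Mathlib

section
/- For a fixed newcomer v with sorted link capacities c₁ ≤ c₂ ≤ ⋯ ≤ c_d to its d providers, the flexible block assignment β*_i = c_i·M / (k·∑_{r=1}^{d-k+1} c_r) for 1 ≤ i ≤ d−k+1 and β*_i = c_{d-k+1}·M / (k·∑_{r=1}^{d-k+1} c_r) for d−k+1 < i ≤ d yields regeneration time max_i β*_i / c_i = M / (k·∑_{r=1}^{d-k+1} c_r). -/
/-- For a fixed newcomer with sorted capacities c₁ ≤ … ≤ c_d, the flexible block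
assignment of Lemma 1 yields regeneration time max_i β*_i / c_i = M / (k·∑_{r=1}^{d-k+1} c_r).
Indices are 0-based: `i ≤ d - k` corresponds to `1 ≤ i ≤ d - k + 1`. -/
theorem flexible_assignment_time (M : ℝ) (hM : 0 < M) (d k : ℕ) (hk : 1 ≤ k) (hkd : k ≤ d)
    (c : Fin d → ℝ) (hpos : ∀ i, 0 < c i) (hmono : Monotone c) :
    Finset.univ.sup' (⟨⟨0, by omega⟩, Finset.mem_univ _⟩ : (Finset.univ : Finset (Fin d)).Nonempty)
      (fun i : Fin d =>
        (if (i : ℕ) ≤ d - k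
          then c i * M / (k * ∑ r ∈ Finset.univ.filter (fun r : Fin d => (r : ℕ) ≤ d - k), c r)
          else c ⟨d - k, by omega⟩ * M /
            (k * ∑ r ∈ Finset.univ.filter (fun r : Fin d => (r : ℕ) ≤ d - k), c r)) / c i)
      = M / (k * ∑ r ∈ Finset.univ.filter (fun r : Fin d => (r : ℕ) ≤ d - k), c r) := by
  set S : ℝ := ∑ r ∈ Finset.univ.filter (fun r : Fin d => (r : ℕ) ≤ d - k), c r with hS
  have hd : 0 < d := lt_of_lt_of_le hk hkd
  have hSpos : 0 < S := by
    apply Finset.sum_pos (fun i _ => hpos i)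
    exact ⟨⟨0, hd⟩, by simp⟩
  have hkpos : (0:ℝ) < k := by exact_mod_cast hk
  have hden : 0 < (k:ℝ) * S := mul_pos hkpos hSpos
  have hval : ∀ i : Fin d, c i * M / ((k:ℝ) * S) / c i = M / ((k:ℝ) * S) := by
    intro i
    rw [div_div, mul_comm ((k:ℝ)*S) (c i), ← div_div, mul_div_cancel_left₀ _ (hpos i).ne']
  have key : ∀ i : Fin d,
      (if (i : ℕ) ≤ d - k then c i * M / ((k:ℝ) * S)
        else c ⟨d - k, by omega⟩ * M / ((k:ℝ) * S)) / c i ≤ M / ((k:ℝ) * S) := by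
    intro i
    by_cases h : (i : ℕ) ≤ d - k
    · rw [if_pos h, hval i]
    · rw [if_neg h]
      have hle : c ⟨d - k, by omega⟩ ≤ c i := hmono (by simp [Fin.le_def]; omega)
      rw [div_le_div_iff₀ (hpos i) hden, div_mul_eq_mul_div, div_le_iff₀ hden]
      have : c ⟨d - k, by omega⟩ * M ≤ c i * M :=
        mul_le_mul_of_nonneg_right hle hM.le
      nlinarith
  apply le_antisymm
  · exact Finset.sup'_le _ _ (fun i _ => key i)
  · have hzero : ((⟨0, hd⟩ : Fin d) : ℕ) ≤ d - k := by simp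
    have := Finset.le_sup' (f := fun i : Fin d =>
        (if (i : ℕ) ≤ d - k then c i * M / ((k:ℝ) * S)
          else c ⟨d - k, by omega⟩ * M / ((k:ℝ) * S)) / c i)
        (Finset.mem_univ (⟨0, hd⟩ : Fin d))
    rwa [if_pos hzero, hval] at this
end

section
/- For a fixed newcomer j, the sum of the (d−k+1) smallest capacities among any d-subset P ⊆ V_p of links to j is maximized by taking P to be the d providers with the largest capacities c(i,j). -/
/-- Sum of the `m` smallest elements of a multiset of reals. -/
noncomputable def smallSum (s : Multiset ℝ) (m : ℕ) : ℝ :=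
  ((s.sort (· ≤ ·)).take m).sum

/-- Removing minimal elements on both sides preserves `Rel (· ≤ ·)`. -/
lemma rel_erase_min {s t : Multiset ℝ} (hrel : Multiset.Rel (· ≤ ·) s t)
    {a b : ℝ} (ha : a ∈ s) (hb : b ∈ t) (hbmin : ∀ y ∈ t, b ≤ y) :
    Multiset.Rel (· ≤ ·) (s.erase a) (t.erase b) := by
  classical
  have hs : s = a ::ₘ s.erase a := (Multiset.cons_erase ha).symm
  rw [hs] at hrel
  rcases Multiset.rel_cons_left.1 hrel with ⟨b', t', hab', hrel', ht⟩
  by_cases hbb' : b = b'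
  · subst hbb'
    have : t.erase b = t' := by rw [ht, Multiset.erase_cons_head]
    rwa [this]
  · have hb' : b ∈ t' := by
      rw [ht] at hb
      rcases Multiset.mem_cons.1 hb with h | h
      · exact absurd h hbb'
      · exact h
    have ht' : t' = b ::ₘ t'.erase b := (Multiset.cons_erase hb').symm
    rw [ht'] at hrel'
    rcases Multiset.rel_cons_right.1 hrel' with ⟨a'', s'', ha''b, hrel'', hs''⟩
    have hb'le : b ≤ b' := hbmin b' (by rw [ht]; exact Multiset.mem_cons_self _ _)
    have : t.erase b = b' ::ₘ t'.erase b := by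
      rw [ht, Multiset.erase_cons_tail_of_mem hb']
    rw [this, hs'']
    exact Multiset.Rel.cons (le_trans ha''b hb'le) hrel''

/-- Sorted lists whose multisets are pointwise related are pointwise related. -/
lemma forall₂_of_rel : ∀ (l₁ l₂ : List ℝ), l₁.Pairwise (· ≤ ·) → l₂.Pairwise (· ≤ ·) →
    Multiset.Rel (· ≤ ·) (↑l₁ : Multiset ℝ) (↑l₂ : Multiset ℝ) →
    List.Forall₂ (· ≤ ·) l₁ l₂
  | l₁, [], _, _, hrel => by
      have : (↑l₁ : Multiset ℝ) = 0 := Multiset.rel_zero_right.1 hrel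
      have : l₁ = [] := by simpa using this
      subst this; exact List.Forall₂.nil
  | [], b :: l₂', _, _, hrel => by
      exfalso
      have : (↑(b :: l₂') : Multiset ℝ) = 0 := Multiset.rel_zero_left.1 hrel
      simp at this
  | a :: l₁', b :: l₂', h₁, h₂, hrel => by
      have hrel' := hrel
      rw [show ((↑(b :: l₂') : Multiset ℝ)) = b ::ₘ ↑l₂' from rfl] at hrel'
      rcases Multiset.rel_cons_right.1 hrel' with ⟨a'', s'', ha''b, _, hs''⟩
      have ha'' : a'' ∈ (↑(a :: l₁') : Multiset ℝ) := by
        rw [hs'']; exact Multiset.mem_cons_self _ _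
      have ha''mem : a'' ∈ a :: l₁' := by simpa using ha''
      have haa'' : a ≤ a'' := by
        rcases List.mem_cons.1 ha''mem with h | h
        · exact h.ge
        · exact List.rel_of_pairwise_cons h₁ h
      have hab : a ≤ b := le_trans haa'' ha''b
      refine List.Forall₂.cons hab ?_
      have hamem : a ∈ (↑(a :: l₁') : Multiset ℝ) := by simp
      have hbmem : b ∈ (↑(b :: l₂') : Multiset ℝ) := by simp
      have hbmin : ∀ y ∈ (↑(b :: l₂') : Multiset ℝ), b ≤ y := by
        intro y hy
        rcases List.mem_cons.1 (by simpa using hy) with h | h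
        · exact h.ge
        · exact List.rel_of_pairwise_cons h₂ h
      have := rel_erase_min hrel hamem hbmem hbmin
      have he1 : ((↑(a :: l₁') : Multiset ℝ)).erase a = ↑l₁' := by
        rw [show ((↑(a :: l₁') : Multiset ℝ)) = a ::ₘ ↑l₁' from rfl,
          Multiset.erase_cons_head]
      have he2 : ((↑(b :: l₂') : Multiset ℝ)).erase b = ↑l₂' := by
        rw [show ((↑(b :: l₂') : Multiset ℝ)) = b ::ₘ ↑l₂' from rfl,
          Multiset.erase_cons_head]
      rw [he1, he2] at this
      exact forall₂_of_rel l₁' l₂' h₁.of_cons h₂.of_cons this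

/-- `smallSum` is monotone with respect to `Multiset.Rel (· ≤ ·)`. -/
lemma smallSum_le_of_rel {s t : Multiset ℝ} (h : Multiset.Rel (· ≤ ·) s t) (m : ℕ) :
    smallSum s m ≤ smallSum t m := by
  have hs : (↑(s.sort (· ≤ ·)) : Multiset ℝ) = s := Multiset.sort_eq _ _
  have ht : (↑(t.sort (· ≤ ·)) : Multiset ℝ) = t := Multiset.sort_eq _ _
  have hrel : Multiset.Rel (· ≤ ·) (↑(s.sort (· ≤ ·)) : Multiset ℝ)
      (↑(t.sort (· ≤ ·)) : Multiset ℝ) := by rw [hs, ht]; exact h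
  have hf := forall₂_of_rel _ _ (Multiset.pairwise_sort s _) (Multiset.pairwise_sort t _) hrel
  have := List.forall₂_take m hf
  exact List.Forall₂.sum_le_sum this

/-- If all elements of `s` are below all elements of `t` and cardinalities agree,
then `Rel (· ≤ ·) s t`. -/
lemma rel_of_forall_le : ∀ (s t : Multiset ℝ), Multiset.card s = Multiset.card t →
    (∀ x ∈ s, ∀ y ∈ t, x ≤ y) → Multiset.Rel (· ≤ ·) s t := by
  intro s
  induction s using Multiset.induction_on with
  | empty =>
    intro t hcard _
    have : t = 0 := by
      rw [← Multiset.card_eq_zero, ← hcard]; simp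
    subst this; exact Multiset.Rel.zero
  | cons a s ih =>
    intro t hcard hle
    have : t ≠ 0 := by
      intro h; subst h; simp at hcard
    rcases Multiset.exists_mem_of_ne_zero this with ⟨b, hb⟩
    have ht : t = b ::ₘ t.erase b := (Multiset.cons_erase hb).symm
    rw [ht]
    refine Multiset.Rel.cons (hle a (Multiset.mem_cons_self _ _) b hb) ?_
    refine ih _ ?_ ?_
    · have := hcard
      rw [ht] at this
      simpa using this
    · intro x hx y hy
      exact hle x (Multiset.mem_cons_of_mem hx) y (Multiset.mem_of_mem_erase hy)

/-- For a fixed newcomer, the sum of the (d−k+1) smallest capacities among any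
d-subset of providers is maximized by the d providers of largest capacity. -/
theorem topd_maximizes_smallSum {Vp : Type*} [Fintype Vp] [DecidableEq Vp]
    (c : Vp → ℝ) (hpos : ∀ i, 0 < c i) (d k : ℕ) (hk : 1 ≤ k) (hkd : k ≤ d)
    (hdcard : d ≤ Fintype.card Vp)
    (P : Finset Vp) (hP : P.card = d)
    (htop : ∀ i ∈ P, ∀ i' ∉ P, c i' ≤ c i)
    (Q : Finset Vp) (hQ : Q.card = d) :
    smallSum (Q.val.map c) (d - k + 1) ≤ smallSum (P.val.map c) (d - k + 1) := by
  classical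
  -- decompose Q and P over the common part Q ∩ P
  have hQdecomp : Q.val = (Q ∩ P).val + (Q \ P).val := by
    have hdisj : Disjoint (Q ∩ P) (Q \ P) := by
      apply Finset.disjoint_left.2
      intro x hx hx'
      exact (Finset.mem_sdiff.1 hx').2 (Finset.mem_inter.1 hx).2
    have : (Q ∩ P).disjUnion (Q \ P) hdisj = Q := by
      ext x
      simp only [Finset.mem_disjUnion, Finset.mem_inter, Finset.mem_sdiff]
      tauto
    conv_lhs => rw [← this]
    rfl
  have hPdecomp : P.val = (Q ∩ P).val + (P \ Q).val := by
    have hdisj : Disjoint (Q ∩ P) (P \ Q) := by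
      apply Finset.disjoint_left.2
      intro x hx hx'
      exact (Finset.mem_sdiff.1 hx').2 (Finset.mem_inter.1 hx).1
    have : (Q ∩ P).disjUnion (P \ Q) hdisj = P := by
      ext x
      simp only [Finset.mem_disjUnion, Finset.mem_inter, Finset.mem_sdiff]
      tauto
    conv_lhs => rw [← this]
    rfl
  have hcards : (Q \ P).card = (P \ Q).card := by
    have h1 := Finset.card_sdiff_add_card_inter Q P
    have h2 := Finset.card_sdiff_add_card_inter P Q
    have h3 : (P ∩ Q).card = (Q ∩ P).card := by rw [Finset.inter_comm]
    omega
  have hrel : Multiset.Rel (· ≤ ·) (Q.val.map c) (P.val.map c) := by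
    rw [hQdecomp, hPdecomp, Multiset.map_add, Multiset.map_add]
    refine Multiset.Rel.add ?_ ?_
    · exact Multiset.rel_refl_of_refl_on (fun x _ => le_refl x)
    · refine rel_of_forall_le _ _ ?_ ?_
      · rw [Multiset.card_map, Multiset.card_map]; exact hcards
      · intro x hx y hy
        rcases Multiset.mem_map.1 hx with ⟨i, hi, rfl⟩
        rcases Multiset.mem_map.1 hy with ⟨i', hi', rfl⟩
        have hi1 : i ∈ Q \ P := hi
        have hi2 : i' ∈ P \ Q := hi'
        exact htop i' (Finset.mem_sdiff.1 hi2).1 i (Finset.mem_sdiff.1 hi1).2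
  exact smallSum_le_of_rel hrel _
end
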